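/- arXiv:1903.12601 — 3 statements merged into one kernel-verified Lean document; each statement's English description precedes it below -/
import Mathlib

section
/- Let B be a real symmetric positive semidefinite n×n matrix and 0 < α < 1/ρ(B). With C = ∑_{t=0}^{T-1}(I - αB)^t and M = C⁻¹(I - αB)^T, the matrix M is symmetric positive definite and satisfies ((1-αρ(B))^T / ∑_{t=0}^{T-1}(1-αρ(B))^t) · I ⪯ M ⪯ (1/T) · I. -/
open Matrix in
private lemma aux_pow_mul_sum_le {a b : ℝ} (ha : 0 ≤ a) (hab : a ≤ b) (T : ℕ) :
    a ^ T * ∑ t ∈ Finset.range T, b ^ t ≤ b ^ T * ∑ t ∈ Finset.range T, a ^ t := by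
  rw [Finset.mul_sum, Finset.mul_sum]
  refine Finset.sum_le_sum fun t ht => ?_
  have hb : 0 ≤ b := ha.trans hab
  have htT : t ≤ T := (Finset.mem_range.mp ht).le
  have h : a ^ (T - t) ≤ b ^ (T - t) := pow_le_pow_left₀ ha hab (T - t)
  have h1 : (0:ℝ) ≤ a ^ t := pow_nonneg ha t
  have h2 : (0:ℝ) ≤ b ^ t := pow_nonneg hb t
  have e1 : a ^ T = a ^ t * a ^ (T - t) := by rw [← pow_add, Nat.add_sub_cancel' htT]
  have e2 : b ^ T = b ^ t * b ^ (T - t) := by rw [← pow_add, Nat.add_sub_cancel' htT]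
  rw [e1, e2]
  calc a ^ t * a ^ (T - t) * b ^ t = (a ^ t * b ^ t) * a ^ (T - t) := by ring
    _ ≤ (a ^ t * b ^ t) * b ^ (T - t) := mul_le_mul_of_nonneg_left h (mul_nonneg h1 h2)
    _ = b ^ t * b ^ (T - t) * a ^ t := by ring

theorem stmt_4 {n : ℕ} (B : Matrix (Fin n) (Fin n) ℝ) (hB : B.PosSemidef)
    (ρ : ℝ) (hρ : IsGreatest {x : ℝ | ∃ i, hB.1.eigenvalues i = x} ρ)
    (α : ℝ) (hα0 : 0 < α) (hα : α < 1 / ρ) (T : ℕ) (hT : 0 < T) :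
    let C : Matrix (Fin n) (Fin n) ℝ :=
      ∑ t ∈ Finset.range T, ((1 : Matrix (Fin n) (Fin n) ℝ) - α • B) ^ t
    let M : Matrix (Fin n) (Fin n) ℝ :=
      C⁻¹ * ((1 : Matrix (Fin n) (Fin n) ℝ) - α • B) ^ T
    M.PosDef ∧
    (M - ((1 - α * ρ) ^ T / ∑ t ∈ Finset.range T, (1 - α * ρ) ^ t) •
        (1 : Matrix (Fin n) (Fin n) ℝ)).PosSemidef ∧
    (((1 : ℝ) / T) • (1 : Matrix (Fin n) (Fin n) ℝ) - M).PosSemidef := by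
  intro C M
  classical
  set lam := hB.1.eigenvalues with hlam
  set V : Matrix (Fin n) (Fin n) ℝ := (hB.1.eigenvectorUnitary : Matrix (Fin n) (Fin n) ℝ)
    with hV
  have hUs : V * star V = 1 := (Matrix.mem_unitaryGroup_iff).mp hB.1.eigenvectorUnitary.2
  have hsU : star V * V = 1 := (Matrix.mem_unitaryGroup_iff').mp hB.1.eigenvectorUnitary.2
  -- conjugation is multiplicative on diagonals
  have hm : ∀ f g : Fin n → ℝ,
      (V * Matrix.diagonal f * star V) * (V * Matrix.diagonal g * star V)
        = V * Matrix.diagonal (fun i => f i * g i) * star V := by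
    intro f g
    calc (V * Matrix.diagonal f * star V) * (V * Matrix.diagonal g * star V)
        = V * Matrix.diagonal f * (star V * V) * Matrix.diagonal g * star V := by
          simp only [Matrix.mul_assoc]
      _ = V * Matrix.diagonal (fun i => f i * g i) * star V := by
          rw [hsU, mul_one, Matrix.mul_assoc V, Matrix.diagonal_mul_diagonal]
  have hpow : ∀ (f : Fin n → ℝ) (k : ℕ),
      (V * Matrix.diagonal f * star V) ^ k
        = V * Matrix.diagonal (fun i => f i ^ k) * star V := by
    intro f k
    induction k with
    | zero =>
        simp only [pow_zero]
        rw [show (Matrix.diagonal fun _ : Fin n => (1:ℝ)) = 1 by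
          simp [Matrix.diagonal_one], mul_one, hUs]
    | succ k ih =>
        rw [pow_succ, ih, hm]
        simp [pow_succ]
  -- spectral theorem
  have hspec : B = V * Matrix.diagonal lam * star V := by
    have h := hB.1.spectral_theorem
    simpa [hV, hlam] using h
  have hB' : (1 : Matrix (Fin n) (Fin n) ℝ) - α • B
      = V * Matrix.diagonal (fun i => 1 - α * lam i) * star V := by
    have hd : Matrix.diagonal (fun i : Fin n => 1 - α * lam i)
        = 1 - α • Matrix.diagonal lam := by
      rw [← Matrix.diagonal_one, ← Matrix.diagonal_smul, ← Matrix.diagonal_sub]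
      congr 1
    rw [hd, Matrix.mul_sub, Matrix.sub_mul, Matrix.mul_one, hUs, Matrix.mul_smul,
      Matrix.smul_mul, ← hspec]
  -- scalar facts
  obtain ⟨⟨i₀, hi₀⟩, hub⟩ := hρ
  have hρ0 : 0 ≤ ρ := hi₀ ▸ hB.eigenvalues_nonneg i₀
  have hρpos : 0 < ρ := by
    rcases hρ0.lt_or_eq with h | h
    · exact h
    · rw [← h] at hα; simp at hα; linarith
  have hαρ : α * ρ < 1 := (lt_div_iff₀ hρpos).mp hα
  set a : ℝ := 1 - α * ρ with haa
  have ha : 0 < a := by simp [haa]; linarith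
  have hlam_le : ∀ i, lam i ≤ ρ := fun i => hub ⟨i, rfl⟩
  have hlam0 : ∀ i, 0 ≤ lam i := fun i => hB.eigenvalues_nonneg i
  set r : Fin n → ℝ := fun i => 1 - α * lam i with hr
  have hra : ∀ i, a ≤ r i := by
    intro i; simp only [hr, haa]
    nlinarith [hlam_le i]
  have hr0 : ∀ i, 0 < r i := fun i => lt_of_lt_of_le ha (hra i)
  have hr1 : ∀ i, r i ≤ 1 := by
    intro i; simp only [hr]
    nlinarith [hlam0 i]
  set S : Fin n → ℝ := fun i => ∑ t ∈ Finset.range T, r i ^ t with hS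
  have hSpos : ∀ i, 0 < S i := by
    intro i
    exact Finset.sum_pos (fun t _ => pow_pos (hr0 i) t)
      (Finset.nonempty_range_iff.mpr hT.ne')
  set Sa : ℝ := ∑ t ∈ Finset.range T, a ^ t with hSa
  have hSapos : 0 < Sa := Finset.sum_pos (fun t _ => pow_pos ha t)
    (Finset.nonempty_range_iff.mpr hT.ne')
  -- matrix computations
  have hC : C = V * Matrix.diagonal S * star V := by
    simp only [C, hB', hpow]
    rw [← Finset.sum_mul, ← Finset.mul_sum]
    congr 2
    ext i j
    simp only [Finset.sum_apply, Matrix.sum_apply, Matrix.diagonal_apply]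
    by_cases h : i = j <;> simp [h, hS]
  have hCinv : C⁻¹ = V * Matrix.diagonal (fun i => (S i)⁻¹) * star V := by
    apply Matrix.inv_eq_left_inv
    rw [hC, hm]
    have hd1 : (fun i => (S i)⁻¹ * S i) = fun _ : Fin n => (1:ℝ) :=
      funext fun i => inv_mul_cancel₀ (hSpos i).ne'
    rw [hd1, show (Matrix.diagonal fun _ : Fin n => (1:ℝ)) = 1 by
      simp [Matrix.diagonal_one], mul_one, hUs]
  set g : Fin n → ℝ := fun i => (S i)⁻¹ * r i ^ T with hg
  have hM : M = V * Matrix.diagonal g * star V := by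
    simp only [M, hCinv, hB', hpow, hm, hg]
  -- pointwise bounds
  set c : ℝ := a ^ T / Sa with hc
  have hcpos : 0 < c := div_pos (pow_pos ha T) hSapos
  have hlow : ∀ i, c ≤ g i := by
    intro i
    have hgi : g i = r i ^ T / S i := inv_mul_eq_div _ _
    rw [hgi, hc, div_le_div_iff₀ hSapos (hSpos i)]
    exact aux_pow_mul_sum_le ha.le (hra i) T
  have hTpos : (0:ℝ) < (T:ℝ) := by exact_mod_cast hT
  have hhigh : ∀ i, g i ≤ 1 / T := by
    intro i
    have hgi : g i = r i ^ T / S i := inv_mul_eq_div _ _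
    rw [hgi, div_le_div_iff₀ (hSpos i) hTpos]
    have := aux_pow_mul_sum_le (hr0 i).le (hr1 i) T
    simpa [hS, mul_comm] using this
  -- rewriting scalar multiples of 1 as conjugated diagonals
  have hsmul : ∀ x : ℝ, x • (1 : Matrix (Fin n) (Fin n) ℝ)
      = V * Matrix.diagonal (fun _ => x) * star V := by
    intro x
    rw [← Matrix.smul_one_eq_diagonal, Matrix.mul_smul, Matrix.smul_mul, mul_one, hUs]
  have hdiff : ∀ f h : Fin n → ℝ,
      V * Matrix.diagonal f * star V - V * Matrix.diagonal h * star V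
        = V * Matrix.diagonal (fun i => f i - h i) * star V := by
    intro f h
    rw [← Matrix.sub_mul, ← Matrix.mul_sub, ← Matrix.diagonal_sub]
  have hpsd : ∀ f : Fin n → ℝ, (∀ i, 0 ≤ f i) →
      (V * Matrix.diagonal f * star V).PosSemidef := by
    intro f hf
    have := (Matrix.posSemidef_diagonal_iff.mpr hf).mul_mul_conjTranspose_same V
    simpa [Matrix.star_eq_conjTranspose] using this
  have goal2 : (M - c • (1 : Matrix (Fin n) (Fin n) ℝ)).PosSemidef := by
    rw [hM, hsmul c, hdiff]
    exact hpsd _ fun i => sub_nonneg.mpr (hlow i)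
  have goal3 : (((1:ℝ)/T) • (1 : Matrix (Fin n) (Fin n) ℝ) - M).PosSemidef := by
    rw [hM, hsmul ((1:ℝ)/T), hdiff]
    exact hpsd _ fun i => sub_nonneg.mpr (hhigh i)
  refine ⟨?_, goal2, goal3⟩
  have hone : (c • (1 : Matrix (Fin n) (Fin n) ℝ)).PosDef := by
    rw [Matrix.smul_one_eq_diagonal]
    exact Matrix.PosDef.diagonal fun i => hcpos
  have : M = c • (1 : Matrix (Fin n) (Fin n) ℝ)
      + (M - c • (1 : Matrix (Fin n) (Fin n) ℝ)) := by abel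
  rw [this]
  exact hone.add_posSemidef goal2
end

section
/- Let B be a real symmetric positive semidefinite n×n matrix and 0 < α < 1/ρ(B). With C = ∑_{t=0}^{T-1}(I - αB)^t, M = C⁻¹(I - αB)^T, and N = (1/α)(C⁻¹ - M), the matrix N is symmetric positive semidefinite. -/
theorem stmt_5 {n : ℕ} (B : Matrix (Fin n) (Fin n) ℝ) (hB : B.PosSemidef)
    (ρ : ℝ) (hρ : IsGreatest {x : ℝ | ∃ i, hB.1.eigenvalues i = x} ρ)
    (α : ℝ) (hα0 : 0 < α) (hα : α < 1 / ρ) (T : ℕ) (hT : 0 < T) :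
    let C : Matrix (Fin n) (Fin n) ℝ :=
      ∑ t ∈ Finset.range T, ((1 : Matrix (Fin n) (Fin n) ℝ) - α • B) ^ t
    let M : Matrix (Fin n) (Fin n) ℝ :=
      C⁻¹ * ((1 : Matrix (Fin n) (Fin n) ℝ) - α • B) ^ T
    (α⁻¹ • (C⁻¹ - M)).PosSemidef := by
  intro C M
  set A : Matrix (Fin n) (Fin n) ℝ := (1 : Matrix (Fin n) (Fin n) ℝ) - α • B with hA
  -- ρ > 0
  have hρ0 : 0 < ρ := by
    obtain ⟨i, hi⟩ := hρ.1
    have h0 : 0 ≤ ρ := hi ▸ hB.eigenvalues_nonneg i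
    rcases h0.lt_or_eq with h | h
    · exact h
    · exfalso; rw [← h] at hα; simp at hα; linarith
  have hαρ : α * ρ < 1 := (lt_div_iff₀ hρ0).mp hα
  have hd : ∀ i, 0 < 1 - α * hB.1.eigenvalues i := by
    intro i
    have : α * hB.1.eigenvalues i ≤ α * ρ :=
      mul_le_mul_of_nonneg_left (hρ.2 ⟨i, rfl⟩) hα0.le
    linarith
  set U : Matrix (Fin n) (Fin n) ℝ := (hB.1.eigenvectorUnitary : Matrix (Fin n) (Fin n) ℝ)
    with hU
  have hUU : U * star U = 1 := (Matrix.mem_unitaryGroup_iff).mp hB.1.eigenvectorUnitary.2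
  have hUU' : star U * U = 1 := (Matrix.mem_unitaryGroup_iff').mp hB.1.eigenvectorUnitary.2
  set d : Fin n → ℝ := fun i => 1 - α * hB.1.eigenvalues i with hdd
  have hAU : A = U * Matrix.diagonal d * star U := by
    have hspec := hB.1.spectral_theorem
    rw [Unitary.conjStarAlgAut_apply, ← hU] at hspec
    rw [hA]
    calc (1 : Matrix (Fin n) (Fin n) ℝ) - α • B
        = U * 1 * star U - α • (U * Matrix.diagonal (RCLike.ofReal ∘ hB.1.eigenvalues) * star U)
          := by rw [mul_one, hUU, ← hspec]
      _ = U * Matrix.diagonal d * star U := by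
          rw [← Matrix.smul_mul, ← Matrix.mul_smul, ← Matrix.sub_mul, ← Matrix.mul_sub]
          have hdiag : (1 : Matrix (Fin n) (Fin n) ℝ)
              - α • Matrix.diagonal (RCLike.ofReal ∘ hB.1.eigenvalues) = Matrix.diagonal d := by
            rw [← Matrix.diagonal_one, ← Matrix.diagonal_smul, ← Matrix.diagonal_sub]
            congr 1
          rw [hdiag]
  have hpow : ∀ t : ℕ, A ^ t = U * Matrix.diagonal (fun i => d i ^ t) * star U := by
    intro t
    induction t with
    | zero => simp [hUU]
    | succ k ih =>
        rw [pow_succ, ih, hAU]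
        calc U * Matrix.diagonal (fun i => d i ^ k) * star U * (U * Matrix.diagonal d * star U)
            = U * (Matrix.diagonal (fun i => d i ^ k) * (star U * U) * Matrix.diagonal d) * star U := by
              noncomm_ring
          _ = U * Matrix.diagonal (fun i => d i ^ (k+1)) * star U := by
              rw [hUU', mul_one, Matrix.diagonal_mul_diagonal]
              have : (fun i => d i ^ k * d i) = fun i => d i ^ (k+1) := by
                funext i; rw [pow_succ]
              rw [this]
  set e : Fin n → ℝ := fun i => ∑ t ∈ Finset.range T, d i ^ t with hee
  have hCU : C = U * Matrix.diagonal e * star U := by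
    show (∑ t ∈ Finset.range T, A ^ t) = _
    calc (∑ t ∈ Finset.range T, A ^ t)
        = ∑ t ∈ Finset.range T, U * Matrix.diagonal (fun i => d i ^ t) * star U := by
          exact Finset.sum_congr rfl fun t _ => hpow t
      _ = U * (∑ t ∈ Finset.range T, Matrix.diagonal (fun i => d i ^ t)) * star U := by
          rw [Finset.mul_sum, Finset.sum_mul]
      _ = U * Matrix.diagonal e * star U := by
          congr 1
          congr 1
          ext i j
          by_cases h : i = j <;>
            simp [Matrix.diagonal, h, hee, Matrix.sum_apply]
  have he : ∀ i, 0 < e i := fun i =>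
    Finset.sum_pos (fun t _ => pow_pos (hd i) t) (Finset.nonempty_range_iff.mpr hT.ne')
  -- C is a unit
  have hCunit : IsUnit C := by
    rw [Matrix.isUnit_iff_isUnit_det]
    have : C * (U * Matrix.diagonal (fun i => (e i)⁻¹) * star U) = 1 := by
      rw [hCU]
      calc U * Matrix.diagonal e * star U * (U * Matrix.diagonal (fun i => (e i)⁻¹) * star U)
          = U * (Matrix.diagonal e * (star U * U) * Matrix.diagonal (fun i => (e i)⁻¹)) * star U
            := by noncomm_ring
        _ = 1 := by
            rw [hUU', mul_one, Matrix.diagonal_mul_diagonal]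
            have : (fun i => e i * (e i)⁻¹) = fun _ => (1:ℝ) := by
              funext i; exact mul_inv_cancel₀ (he i).ne'
            rw [this, Matrix.diagonal_one, mul_one, hUU]
    have := congrArg Matrix.det this
    rw [Matrix.det_mul, Matrix.det_one] at this
    exact IsUnit.of_mul_eq_one _ this
  have hCinv : C⁻¹ * C = 1 :=
    Matrix.nonsing_inv_mul C ((Matrix.isUnit_iff_isUnit_det C).mp hCunit)
  -- geometric sum identity
  have hgeom : C * (1 - A) = 1 - A ^ T := by
    have := geom_sum_mul A T
    show (∑ t ∈ Finset.range T, A ^ t) * (1 - A) = 1 - A ^ T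
    calc (∑ t ∈ Finset.range T, A ^ t) * (1 - A)
        = -((∑ t ∈ Finset.range T, A ^ t) * (A - 1)) := by noncomm_ring
      _ = -(A ^ T - 1) := by rw [this]
      _ = 1 - A ^ T := by noncomm_ring
  have key : C⁻¹ - M = α • B := by
    show C⁻¹ - C⁻¹ * A ^ T = α • B
    calc C⁻¹ - C⁻¹ * A ^ T = C⁻¹ * (1 - A ^ T) := by noncomm_ring
      _ = C⁻¹ * (C * (1 - A)) := by rw [hgeom]
      _ = (C⁻¹ * C) * (1 - A) := by rw [mul_assoc]
      _ = 1 - A := by rw [hCinv, one_mul]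
      _ = α • B := by rw [hA]; noncomm_ring
  rw [key, smul_smul, inv_mul_cancel₀ hα0.ne', one_smul]
  exact hB
end

section
/- Let L, η, ρ > 0 with ρ being a positive real (eigenvalue bound), T ≥ 1 an integer, and suppose 0 < α < (1 - (L²/(L² + ηρ))^{1/T})/ρ. Then (1-αρ)^T/(1-(1-αρ)^T) · αρ - α L²/η > 0. -/
theorem stmt_14 (L η ρ : ℝ) (hL : 0 < L) (hη : 0 < η) (hρ : 0 < ρ)
    (T : ℕ) (hT : 0 < T) (α : ℝ) (hα0 : 0 < α)
    (hα : α < (1 - (L ^ 2 / (L ^ 2 + η * ρ)) ^ ((1 : ℝ) / T)) / ρ) :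
    0 < (1 - α * ρ) ^ T / (1 - (1 - α * ρ) ^ T) * (α * ρ) - α * L ^ 2 / η := by
  have hden : (0:ℝ) < L ^ 2 + η * ρ := by positivity
  set b : ℝ := L ^ 2 / (L ^ 2 + η * ρ) with hbdef
  have hb0 : 0 < b := by positivity
  set c : ℝ := b ^ ((1:ℝ)/T) with hcdef
  have hc0 : 0 < c := Real.rpow_pos_of_pos hb0 _
  have hcT : c ^ T = b := by
    rw [hcdef, ← Real.rpow_natCast (b ^ ((1:ℝ)/T)) T, ← Real.rpow_mul hb0.le, one_div,
      inv_mul_cancel₀ (by exact_mod_cast hT.ne' : (T:ℝ) ≠ 0), Real.rpow_one]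
  have hq : c < 1 - α * ρ := by
    have := (lt_div_iff₀ hρ).mp hα
    linarith
  have hq1 : 1 - α * ρ < 1 := by nlinarith
  have hqT : b < (1 - α * ρ) ^ T := by
    calc b = c ^ T := hcT.symm
    _ < (1 - α * ρ) ^ T := pow_lt_pow_left₀ hq hc0.le hT.ne'
  have hqT1 : (1 - α * ρ) ^ T < 1 :=
    pow_lt_one₀ (by linarith) hq1 hT.ne'
  have h1 : 0 < 1 - (1 - α * ρ) ^ T := by linarith
  rw [sub_pos, div_mul_eq_mul_div, div_lt_div_iff₀ hη h1]
  have key : L ^ 2 < (1 - α * ρ) ^ T * (L ^ 2 + η * ρ) := by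
    rw [hbdef, div_lt_iff₀ hden] at hqT
    linarith
  nlinarith [mul_pos hα0 hη, mul_pos (mul_pos hα0 hη) hρ]
end
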